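/- arXiv:2505.04048 — 6 statements merged into one kernel-verified Lean document; each statement's English description precedes it below -/
import Mathlib

section
/- Let G be a bipartite simple graph on a finite vertex set V = X ⊔ Y with |X| = |Y| = n, and let c₁, c₂ : E(G) → ℝ be two cost functions. Suppose r ∈ E(G) is an edge with {e ∈ E(G) : c₁(e) ≤ c₁(r)} = {e ∈ E(G) : c₂(e) ≤ c₂(r)}; call Γ the spanning subgraph with this common edge set. If Γ has a perfect matching while Γ with the edge r deleted has no perfect matching, then d_B(G, c₁) = c₁(r) and d_B(G, c₂) = c₂(r); in particular, the edge realizing the bottleneck cost is the same edge r for both cost functions. -/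
/-- `M` is a perfect matching (given as a set of edges): every vertex of `V`
lies in exactly one edge of `M`. -/
def IsPerfectMatchingES {V : Type} (M : Set (Sym2 V)) : Prop :=
  ∀ v : V, ∃! e, e ∈ M ∧ v ∈ e

/-- The spanning subgraph with edge set `S` has a perfect matching. -/
def HasPerfectMatchingES {V : Type} (S : Set (Sym2 V)) : Prop :=
  ∃ M ⊆ S, IsPerfectMatchingES M

/-- The edge set of the threshold subgraph `G_λ = {e ∈ E(G) : c e ≤ λ}`. -/
def thresholdEdges {V : Type} (G : SimpleGraph V) (c : Sym2 V → ℝ) (lam : ℝ) :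
    Set (Sym2 V) :=
  {e | e ∈ G.edgeSet ∧ c e ≤ lam}

lemma hpm_mono {V : Type} {S T : Set (Sym2 V)} (h : S ⊆ T) :
    HasPerfectMatchingES S → HasPerfectMatchingES T := by
  rintro ⟨M, hM, hpm⟩
  exact ⟨M, hM.trans h, hpm⟩

/-- internal-event lemma. Suppose the two cost functions `c₁, c₂` induce
the same threshold subgraph `Γ` at the respective costs of an edge `r`, that `Γ` has a
perfect matching, and that `Γ` with `r` deleted has none. Then the bottleneck cost for `c₁`
is `c₁(r)` and the bottleneck cost for `c₂` is `c₂(r)`; in particular, the bottleneck edge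
is the same edge `r` for both cost functions (every perfect matching of `Γ` contains `r`). -/
theorem stmt1 {V : Type} [Fintype V] [DecidableEq V]
    (X Y : Finset V) (n : ℕ)
    (hdisj : Disjoint X Y) (hcover : X ∪ Y = Finset.univ)
    (hXcard : X.card = n) (hYcard : Y.card = n)
    (G : SimpleGraph V)
    (hbip : ∀ u v : V, G.Adj u v → (u ∈ X ∧ v ∈ Y) ∨ (u ∈ Y ∧ v ∈ X))
    (c₁ c₂ : Sym2 V → ℝ) (r : Sym2 V) (hr : r ∈ G.edgeSet)
    (Γ : Set (Sym2 V))
    (hΓ₁ : Γ = thresholdEdges G c₁ (c₁ r))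
    (hΓ₂ : Γ = thresholdEdges G c₂ (c₂ r))
    (hpm : HasPerfectMatchingES Γ)
    (hnopm : ¬ HasPerfectMatchingES (Γ \ {r})) :
    IsLeast {lam : ℝ | HasPerfectMatchingES (thresholdEdges G c₁ lam)} (c₁ r) ∧
    IsLeast {lam : ℝ | HasPerfectMatchingES (thresholdEdges G c₂ lam)} (c₂ r) ∧
    (∀ M ⊆ Γ, IsPerfectMatchingES M → r ∈ M) := by
  have key : ∀ (c : Sym2 V → ℝ), Γ = thresholdEdges G c (c r) →
      IsLeast {lam : ℝ | HasPerfectMatchingES (thresholdEdges G c lam)} (c r) := by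
    intro c hΓ
    constructor
    · show HasPerfectMatchingES _
      rw [← hΓ]; exact hpm
    · intro lam hlam
      by_contra hlt
      push_neg at hlt
      apply hnopm
      apply hpm_mono _ hlam
      intro e he
      obtain ⟨heG, hce⟩ := he
      constructor
      · rw [hΓ]; exact ⟨heG, hce.trans hlt.le⟩
      · intro hee
        rw [Set.mem_singleton_iff] at hee
        subst hee
        exact absurd (hce.trans_lt hlt) (lt_irrefl _)
  refine ⟨key c₁ hΓ₁, key c₂ hΓ₂, ?_⟩
  intro M hM hMpm
  by_contra hrM
  exact hnopm ⟨M, fun e he => ⟨hM he, fun h => hrM (h ▸ he)⟩, hMpm⟩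
end

section
/- Let G be a bipartite simple graph on a finite vertex set V = X ⊔ Y with |X| = |Y| = n, and let c₁, c₂ : E(G) → ℝ be two cost functions. Let Γ = {e' ∈ E(G) : c₁(e') ≤ c₁(r)} for an edge r, let M ⊆ Γ be a perfect matching of the subgraph with edge set Γ with r ∈ M, and suppose the subgraph with edge set Γ \ {r} has no perfect matching. Let e ∈ Γ with e ∉ M and e ≠ r, and suppose {e' ∈ E(G) : c₂(e') ≤ c₂(r)} = Γ \ {e}. Then M is a perfect matching of the subgraph with edge set Γ \ {e}, the subgraph with edge set (Γ \ {e}) \ {r} has no perfect matching, and consequently d_B(G, c₂) = c₂(r) with bottleneck edge r. -/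
/-- L-Event lemma. Let `Γ` be the threshold edge set of `c₁` at `c₁ r`,
let `M ⊆ Γ` be a perfect matching with `r ∈ M` such that `Γ \ {r}` has no perfect matching,
and let `e ∈ Γ` be an edge not in `M` with `e ≠ r`, such that the threshold edge set of
`c₂` at `c₂ r` is `Γ \ {e}`. Then `M` is a perfect matching of the subgraph with edge set
`Γ \ {e}`, the edge set `(Γ \ {e}) \ {r}` has no perfect matching, and consequently the
bottleneck cost for `c₂` is `c₂ r` with bottleneck edge `r` (every perfect matching of the
subgraph with edge set `Γ \ {e}` contains `r`). -/
theorem stmt2 {V : Type} [Fintype V] [DecidableEq V]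
    (X Y : Finset V) (n : ℕ)
    (hdisj : Disjoint X Y) (hcover : X ∪ Y = Finset.univ)
    (hXcard : X.card = n) (hYcard : Y.card = n)
    (G : SimpleGraph V)
    (hbip : ∀ u v : V, G.Adj u v → (u ∈ X ∧ v ∈ Y) ∨ (u ∈ Y ∧ v ∈ X))
    (c₁ c₂ : Sym2 V → ℝ) (r e : Sym2 V)
    (Γ : Set (Sym2 V)) (hΓ : Γ = thresholdEdges G c₁ (c₁ r))
    (M : Set (Sym2 V)) (hMΓ : M ⊆ Γ) (hMpm : IsPerfectMatchingES M) (hrM : r ∈ M)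
    (hnopm : ¬ HasPerfectMatchingES (Γ \ {r}))
    (heΓ : e ∈ Γ) (heM : e ∉ M) (her : e ≠ r)
    (h2 : thresholdEdges G c₂ (c₂ r) = Γ \ {e}) :
    (M ⊆ Γ \ {e} ∧ IsPerfectMatchingES M) ∧
    ¬ HasPerfectMatchingES ((Γ \ {e}) \ {r}) ∧
    IsLeast {lam : ℝ | HasPerfectMatchingES (thresholdEdges G c₂ lam)} (c₂ r) ∧
    (∀ M' ⊆ Γ \ {e}, IsPerfectMatchingES M' → r ∈ M') := by

  have hMsub : M ⊆ Γ \ {e} := fun x hx =>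
    ⟨hMΓ hx, fun hxe => heM (Set.mem_singleton_iff.mp hxe ▸ hx)⟩
  have hnopm2 : ¬ HasPerfectMatchingES ((Γ \ {e}) \ {r}) := by
    intro ⟨M', hM'sub, hM'pm⟩
    exact hnopm ⟨M', fun x hx => ⟨(hM'sub hx).1.1, (hM'sub hx).2⟩, hM'pm⟩
  have hkey : ∀ M' ⊆ Γ \ {e}, IsPerfectMatchingES M' → r ∈ M' := by
    intro M' hM' hpm
    by_contra hr
    exact hnopm2 ⟨M', fun x hx => ⟨hM' hx, fun hxr => hr (hxr ▸ hx)⟩, hpm⟩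
  refine ⟨⟨hMsub, hMpm⟩, hnopm2, ⟨⟨M, h2 ▸ hMsub, hMpm⟩, ?_⟩, hkey⟩
  intro lam ⟨M', hM'sub, hM'pm⟩
  by_contra hlt
  push_neg at hlt
  have hsub : thresholdEdges G c₂ lam ⊆ (Γ \ {e}) \ {r} := by
    intro x hx
    have hxΓe : x ∈ Γ \ {e} := h2 ▸ ⟨hx.1, hx.2.trans hlt.le⟩
    refine ⟨hxΓe, fun hxr => ?_⟩
    rw [Set.mem_singleton_iff] at hxr
    exact absurd (hxr ▸ hx.2) (not_le.mpr hlt)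
  exact hnopm2 ⟨M', fun x hx => hsub (hM'sub hx), hM'pm⟩
end

section
/- Let G be a bipartite simple graph on a finite vertex set V = X ⊔ Y with |X| = |Y| = n, and let c₁, c₂ : E(G) → ℝ be two cost functions. Let Γ = {e' ∈ E(G) : c₁(e') ≤ c₁(r)} for an edge r, let M ⊆ Γ be a perfect matching of the subgraph with edge set Γ with r ∈ M, and suppose the subgraph with edge set Γ \ {r} has no perfect matching. Let e ∈ M with e ≠ r, and suppose {e' ∈ E(G) : c₂(e') ≤ c₂(r)} = Γ \ {e} and {e' ∈ E(G) : c₂(e') ≤ c₂(e)} = Γ. Then exactly one of the following holds: (1) the subgraph with edge set Γ \ {e} has a perfect matching, and then d_B(G, c₂) = c₂(r); or (2) the subgraph with edge set Γ \ {e} has no perfect matching, and then d_B(G, c₂) = c₂(e). -/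
/-- M-Event lemma. Let `Γ` be the threshold edge set of `c₁` at `c₁ r`,
let `M ⊆ Γ` be a perfect matching with `r ∈ M` such that `Γ \ {r}` has no perfect matching,
and let `e ∈ M`, `e ≠ r`, where the new cost `c₂` satisfies: the threshold edge set at
`c₂ r` is `Γ \ {e}` and the threshold edge set at `c₂ e` is `Γ`. Then exactly one of:
(1) `Γ \ {e}` has a perfect matching, and then the bottleneck cost for `c₂` is `c₂ r`; or
(2) `Γ \ {e}` has no perfect matching, and then the bottleneck cost for `c₂` is `c₂ e`. -/
theorem stmt3 {V : Type} [Fintype V] [DecidableEq V]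
    (X Y : Finset V) (n : ℕ)
    (hdisj : Disjoint X Y) (hcover : X ∪ Y = Finset.univ)
    (hXcard : X.card = n) (hYcard : Y.card = n)
    (G : SimpleGraph V)
    (hbip : ∀ u v : V, G.Adj u v → (u ∈ X ∧ v ∈ Y) ∨ (u ∈ Y ∧ v ∈ X))
    (c₁ c₂ : Sym2 V → ℝ) (r e : Sym2 V)
    (Γ : Set (Sym2 V)) (hΓ : Γ = thresholdEdges G c₁ (c₁ r))
    (M : Set (Sym2 V)) (hMΓ : M ⊆ Γ) (hMpm : IsPerfectMatchingES M) (hrM : r ∈ M)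
    (hnopm : ¬ HasPerfectMatchingES (Γ \ {r}))
    (heM : e ∈ M) (her : e ≠ r)
    (h2r : thresholdEdges G c₂ (c₂ r) = Γ \ {e})
    (h2e : thresholdEdges G c₂ (c₂ e) = Γ) :
    (HasPerfectMatchingES (Γ \ {e}) →
      IsLeast {lam : ℝ | HasPerfectMatchingES (thresholdEdges G c₂ lam)} (c₂ r)) ∧
    (¬ HasPerfectMatchingES (Γ \ {e}) →
      IsLeast {lam : ℝ | HasPerfectMatchingES (thresholdEdges G c₂ lam)} (c₂ e)) := by
  have heΓ : e ∈ Γ := hMΓ heM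
  have heE : e ∈ G.edgeSet := by rw [hΓ] at heΓ; exact heΓ.1
  have hre : c₂ r < c₂ e := by
    by_contra h
    push_neg at h
    have he' : e ∈ thresholdEdges G c₂ (c₂ r) := ⟨heE, h⟩
    rw [h2r] at he'
    exact he'.2 rfl
  have mono : ∀ lam lam' : ℝ, lam ≤ lam' →
      thresholdEdges G c₂ lam ⊆ thresholdEdges G c₂ lam' :=
    fun lam lam' h x hx => ⟨hx.1, hx.2.trans h⟩
  have hpmmono : ∀ S T : Set (Sym2 V), S ⊆ T →
      HasPerfectMatchingES S → HasPerfectMatchingES T := by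
    rintro S T hST ⟨M', hM', hpm⟩
    exact ⟨M', hM'.trans hST, hpm⟩
  have hlbr : ∀ lam ∈ {lam : ℝ | HasPerfectMatchingES (thresholdEdges G c₂ lam)},
      c₂ r ≤ lam := by
    intro lam hlam
    by_contra h
    push_neg at h
    apply hnopm
    apply hpmmono _ _ _ hlam
    intro x hx
    have hx' : x ∈ Γ \ {e} := h2r ▸ mono lam (c₂ r) h.le hx
    refine ⟨hx'.1, fun hxr => ?_⟩
    rw [Set.mem_singleton_iff] at hxr
    subst hxr
    exact absurd hx.2 (not_le.mpr h)
  constructor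
  · intro hpm
    refine ⟨?_, hlbr⟩
    show HasPerfectMatchingES (thresholdEdges G c₂ (c₂ r))
    rw [h2r]; exact hpm
  · intro hnpm
    constructor
    · show HasPerfectMatchingES (thresholdEdges G c₂ (c₂ e))
      rw [h2e]; exact ⟨M, hMΓ, hMpm⟩
    · intro lam hlam
      by_contra h
      push_neg at h
      apply hnpm
      apply hpmmono _ _ _ hlam
      intro x hx
      have hxΓ : x ∈ Γ := h2e ▸ mono lam (c₂ e) h.le hx
      refine ⟨hxΓ, fun hxe => ?_⟩
      rw [Set.mem_singleton_iff] at hxe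
      subst hxe
      exact absurd hx.2 (not_le.mpr h)
end

section
/- Let G be a bipartite simple graph on a finite vertex set V = X ⊔ Y with |X| = |Y| = n, and let c₁, c₂ : E(G) → ℝ be two cost functions. Let Γ = {e' ∈ E(G) : c₁(e') ≤ c₁(r)} for an edge r, let M ⊆ Γ be a perfect matching of the subgraph with edge set Γ with r ∈ M, and suppose the subgraph with edge set Γ \ {r} has no perfect matching. Let e ∈ E(G) with e ∉ Γ, and suppose {e' ∈ E(G) : c₂(e') ≤ c₂(e)} = (Γ ∪ {e}) \ {r} and {e' ∈ E(G) : c₂(e') ≤ c₂(r)} = Γ ∪ {e}. Then exactly one of the following holds: (1) the subgraph with edge set (Γ ∪ {e}) \ {r} has a perfect matching, and then d_B(G, c₂) = c₂(e); or (2) the subgraph with edge set (Γ ∪ {e}) \ {r} has no perfect matching, and then d_B(G, c₂) = c₂(r). -/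
/-- U-Event lemma. Let `Γ` be the threshold edge set of `c₁` at `c₁ r`,
let `M ⊆ Γ` be a perfect matching with `r ∈ M` such that `Γ \ {r}` has no perfect matching,
and let `e ∈ E(G)` with `e ∉ Γ`, where the new cost `c₂` satisfies: the threshold edge set
at `c₂ e` is `(Γ ∪ {e}) \ {r}` and the threshold edge set at `c₂ r` is `Γ ∪ {e}`.
Then exactly one of:
(1) `(Γ ∪ {e}) \ {r}` has a perfect matching, and then the bottleneck cost for `c₂` is `c₂ e`; or
(2) `(Γ ∪ {e}) \ {r}` has no perfect matching, and then the bottleneck cost for `c₂` is `c₂ r`. -/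
theorem stmt4 {V : Type} [Fintype V] [DecidableEq V]
    (X Y : Finset V) (n : ℕ)
    (hdisj : Disjoint X Y) (hcover : X ∪ Y = Finset.univ)
    (hXcard : X.card = n) (hYcard : Y.card = n)
    (G : SimpleGraph V)
    (hbip : ∀ u v : V, G.Adj u v → (u ∈ X ∧ v ∈ Y) ∨ (u ∈ Y ∧ v ∈ X))
    (c₁ c₂ : Sym2 V → ℝ) (r e : Sym2 V)
    (Γ : Set (Sym2 V)) (hΓ : Γ = thresholdEdges G c₁ (c₁ r))
    (M : Set (Sym2 V)) (hMΓ : M ⊆ Γ) (hMpm : IsPerfectMatchingES M) (hrM : r ∈ M)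
    (hnopm : ¬ HasPerfectMatchingES (Γ \ {r}))
    (heE : e ∈ G.edgeSet) (heΓ : e ∉ Γ)
    (h2e : thresholdEdges G c₂ (c₂ e) = (Γ ∪ {e}) \ {r})
    (h2r : thresholdEdges G c₂ (c₂ r) = Γ ∪ {e}) :
    (HasPerfectMatchingES ((Γ ∪ {e}) \ {r}) →
      IsLeast {lam : ℝ | HasPerfectMatchingES (thresholdEdges G c₂ lam)} (c₂ e)) ∧
    (¬ HasPerfectMatchingES ((Γ ∪ {e}) \ {r}) →
      IsLeast {lam : ℝ | HasPerfectMatchingES (thresholdEdges G c₂ lam)} (c₂ r)) := by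
  have mono : ∀ {S T : Set (Sym2 V)}, S ⊆ T → HasPerfectMatchingES S →
      HasPerfectMatchingES T := by
    rintro S T hST ⟨N, hNS, hN⟩
    exact ⟨N, hNS.trans hST, hN⟩
  have hre : r ≠ e := fun h => heΓ (h ▸ hMΓ hrM)
  constructor
  · intro hpm
    constructor
    · show HasPerfectMatchingES _
      rw [h2e]; exact hpm
    · intro lam hlam
      by_contra hlt
      push_neg at hlt
      apply hnopm
      refine mono ?_ hlam
      intro f hf
      have hf' : f ∈ thresholdEdges G c₂ (c₂ e) := ⟨hf.1, hf.2.trans hlt.le⟩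
      rw [h2e] at hf'
      have hfe : f ≠ e := by
        rintro rfl
        exact absurd hf.2 (not_le.2 hlt)
      rcases hf'.1 with h | h
      · exact ⟨h, hf'.2⟩
      · exact absurd h hfe
  · intro hnpm
    constructor
    · show HasPerfectMatchingES _
      rw [h2r]
      exact ⟨M, fun f hf => Or.inl (hMΓ hf), hMpm⟩
    · intro lam hlam
      by_contra hlt
      push_neg at hlt
      apply hnpm
      refine mono ?_ hlam
      intro f hf
      have hf' : f ∈ thresholdEdges G c₂ (c₂ r) := ⟨hf.1, hf.2.trans hlt.le⟩
      rw [h2r] at hf'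
      have hfr : f ≠ r := by
        rintro rfl
        exact absurd hf.2 (not_le.2 hlt)
      exact ⟨hf', hfr⟩
end

section
/- Let X and Y be finite sets of points in ℝ² lying strictly above the diagonal Δ = {(t,t) : t ∈ ℝ} (i.e., z₂ > z₁ for every point z = (z₁, z₂)). For z = (z₁, z₂), let z' = ((z₁+z₂)/2, (z₁+z₂)/2) denote its orthogonal projection onto Δ, and let X̄, Ȳ be the sets of projections of points of X, Y respectively. Define the complete bipartite graph G on U ⊔ V with U = X ⊔ Ȳ and V = Y ⊔ X̄, with edge costs c(uv) = ‖u − v‖_∞ if u ∈ X or v ∈ Y, and c(uv) = 0 if u ∈ Ȳ and v ∈ X̄. Then the bottleneck cost d_B(G) (the least λ such that the subgraph of edges of cost at most λ has a perfect matching) equals the bottleneck distance d_B(X, Y) = min over partial matchings η : X ⇌ Y of c(η). -/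
/-- Orthogonal projection of a point of the plane onto the diagonal `Δ = {(t,t)}`. -/
noncomputable def diagProj (z : ℝ × ℝ) : ℝ × ℝ := ((z.1 + z.2) / 2, (z.1 + z.2) / 2)

/-- The edge costs of the complete bipartite graph on `U ⊔ V`, `U = X ⊔ Ȳ`, `V = Y ⊔ X̄`:
`c(uv) = ‖u − v‖_∞` if `u ∈ X` or `v ∈ Y`, and `c(uv) = 0` if `u ∈ Ȳ` and `v ∈ X̄`.
(Note that the norm on `ℝ × ℝ` is the sup-norm.) -/
noncomputable def bipCost (X Y : Finset (ℝ × ℝ)) :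
    ({x // x ∈ X} ⊕ {y // y ∈ Y}) → ({y // y ∈ Y} ⊕ {x // x ∈ X}) → ℝ
  | Sum.inl x, Sum.inl y => ‖(x : ℝ × ℝ) - (y : ℝ × ℝ)‖
  | Sum.inl x, Sum.inr x' => ‖(x : ℝ × ℝ) - diagProj (x' : ℝ × ℝ)‖
  | Sum.inr y', Sum.inl y => ‖diagProj (y' : ℝ × ℝ) - (y : ℝ × ℝ)‖
  | Sum.inr _, Sum.inr _ => 0

lemma diag_le_norm (z : ℝ × ℝ) (t : ℝ) : (z.2 - z.1) / 2 ≤ ‖z - (t, t)‖ := by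
  have h : ‖z - (t, t)‖ = max |z.1 - t| |z.2 - t| := by
    rw [Prod.norm_def]; simp [Real.norm_eq_abs]
  rw [h]
  have h1' : -|z.1 - t| ≤ z.1 - t := neg_abs_le _
  have h2 : z.2 - t ≤ |z.2 - t| := le_abs_self _
  have hm1 : |z.1 - t| ≤ max |z.1 - t| |z.2 - t| := le_max_left _ _
  have hm2 : |z.2 - t| ≤ max |z.1 - t| |z.2 - t| := le_max_right _ _
  linarith

lemma norm_diagProj (z : ℝ × ℝ) (h : z.1 ≤ z.2) : ‖z - diagProj z‖ = (z.2 - z.1) / 2 := by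
  have h1 : |z.1 - (z.1 + z.2) / 2| = (z.2 - z.1) / 2 := by
    rw [abs_of_nonpos (by linarith)]; ring
  have h2 : |z.2 - (z.1 + z.2) / 2| = (z.2 - z.1) / 2 := by
    rw [abs_of_nonneg (by linarith)]; ring
  have hh : ‖z - diagProj z‖ = max |z.1 - (z.1 + z.2) / 2| |z.2 - (z.1 + z.2) / 2| := by
    rw [Prod.norm_def]; simp [diagProj, Real.norm_eq_abs]
  rw [hh, h1, h2, max_self]

lemma bipCost_nonneg (X Y : Finset (ℝ × ℝ)) (u v) : 0 ≤ bipCost X Y u v := by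
  cases u <;> cases v <;> simp [bipCost]

/-- Reduction Lemma. For finite sets `X, Y` of points of `ℝ²` strictly
above the diagonal, the bottleneck cost of the complete bipartite graph on
`U ⊔ V = (X ⊔ Ȳ) ⊔ (Y ⊔ X̄)` (the least `λ ≥ 0` such that the edges of cost at most `λ`
contain a perfect matching, i.e. there is a bijection `U ≃ V` all of whose pairs have cost
at most `λ`) equals the bottleneck distance `d_B(X, Y)` (the least `λ ≥ 0` achievable as the
cost of a partial matching `η : X ⇌ Y`). -/
theorem stmt7 (X Y : Finset (ℝ × ℝ))
    (hX : ∀ z ∈ X, z.1 < z.2) (hY : ∀ z ∈ Y, z.1 < z.2) :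
    ∃ d : ℝ,
      IsLeast {lam : ℝ | 0 ≤ lam ∧
        ∃ σ : ({x // x ∈ X} ⊕ {y // y ∈ Y}) ≃ ({y // y ∈ Y} ⊕ {x // x ∈ X}),
          ∀ u, bipCost X Y u (σ u) ≤ lam} d ∧
      IsLeast {lam : ℝ | 0 ≤ lam ∧
        ∃ (X' Y' : Finset (ℝ × ℝ)) (η : ℝ × ℝ → ℝ × ℝ),
          X' ⊆ X ∧ Y' ⊆ Y ∧ Set.BijOn η ↑X' ↑Y' ∧
          (∀ x ∈ X', ‖x - η x‖ ≤ lam) ∧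
          (∀ z ∈ (X \ X') ∪ (Y \ Y'), (z.2 - z.1) / 2 ≤ lam)} d := by
  classical
  set c := bipCost X Y with hc
  have hcard : Fintype.card ({x // x ∈ X} ⊕ {y // y ∈ Y}) =
      Fintype.card ({y // y ∈ Y} ⊕ {x // x ∈ X}) := by
    simp [Fintype.card_sum, add_comm]
  haveI hne : Nonempty (({x // x ∈ X} ⊕ {y // y ∈ Y}) ≃ ({y // y ∈ Y} ⊕ {x // x ∈ X})) :=
    ⟨Fintype.equivOfCardEq hcard⟩
  set F : (({x // x ∈ X} ⊕ {y // y ∈ Y}) ≃ ({y // y ∈ Y} ⊕ {x // x ∈ X})) → ℝ :=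
    fun σ => (insert (0 : ℝ) (Finset.univ.image fun u => c u (σ u))).max'
      (Finset.insert_nonempty _ _) with hF
  have hFle : ∀ σ lam, F σ ≤ lam ↔ (0 ≤ lam ∧ ∀ u, c u (σ u) ≤ lam) := by
    intro σ lam
    constructor
    · intro h
      refine ⟨le_trans (Finset.le_max' _ _ (Finset.mem_insert_self _ _)) h,
        fun u => le_trans (Finset.le_max' _ _ ?_) h⟩
      exact Finset.mem_insert_of_mem (Finset.mem_image_of_mem _ (Finset.mem_univ u))
    · rintro ⟨h0, hu⟩
      apply Finset.max'_le
      intro y hy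
      rcases Finset.mem_insert.mp hy with rfl | hy
      · exact h0
      · rcases Finset.mem_image.mp hy with ⟨u, _, rfl⟩; exact hu u
  set S := Finset.univ.image F with hS
  have hSne : S.Nonempty := Finset.Nonempty.image Finset.univ_nonempty _
  set d := S.min' hSne with hd
  have hdA : 0 ≤ d ∧ ∃ σ : ({x // x ∈ X} ⊕ {y // y ∈ Y}) ≃ ({y // y ∈ Y} ⊕ {x // x ∈ X}), ∀ u, c u (σ u) ≤ d := by
    obtain ⟨σ0, _, hσ0⟩ := Finset.mem_image.mp (S.min'_mem hSne)
    have := (hFle σ0 d).mp (le_of_eq hσ0)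
    exact ⟨this.1, σ0, this.2⟩
  have hlbA : ∀ lam, (0 ≤ lam ∧ ∃ σ : ({x // x ∈ X} ⊕ {y // y ∈ Y}) ≃ ({y // y ∈ Y} ⊕ {x // x ∈ X}), ∀ u, c u (σ u) ≤ lam) → d ≤ lam := by
    rintro lam ⟨h0, σ, hσ⟩
    exact le_trans (Finset.min'_le _ _ (Finset.mem_image_of_mem F (Finset.mem_univ σ)))
      ((hFle σ lam).mpr ⟨h0, hσ⟩)
  -- direction A → B
  have hAB : ∀ lam : ℝ, (0 ≤ lam ∧ ∃ σ : ({x // x ∈ X} ⊕ {y // y ∈ Y}) ≃ ({y // y ∈ Y} ⊕ {x // x ∈ X}), ∀ u, c u (σ u) ≤ lam) →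
      (0 ≤ lam ∧ ∃ (X' Y' : Finset (ℝ × ℝ)) (η : ℝ × ℝ → ℝ × ℝ),
        X' ⊆ X ∧ Y' ⊆ Y ∧ Set.BijOn η ↑X' ↑Y' ∧
        (∀ x ∈ X', ‖x - η x‖ ≤ lam) ∧
        (∀ z ∈ (X \ X') ∪ (Y \ Y'), (z.2 - z.1) / 2 ≤ lam)) := by
    rintro lam ⟨h0, σ, hσ⟩
    refine ⟨h0, ?_⟩
    set X' : Finset (ℝ × ℝ) :=
      (X.attach.filter fun x => (σ (Sum.inl x)).isLeft).image Subtype.val with hX'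
    set Y' : Finset (ℝ × ℝ) :=
      (Y.attach.filter fun y => (σ.symm (Sum.inl y)).isLeft).image Subtype.val with hY'
    have hmemX' : ∀ z, z ∈ X' ↔ ∃ h : z ∈ X, ∃ y, σ (Sum.inl ⟨z, h⟩) = Sum.inl y := by
      intro z
      rw [hX']
      simp only [Finset.mem_image, Finset.mem_filter, Finset.mem_attach, true_and]
      constructor
      · rintro ⟨a, hL, rfl⟩
        obtain ⟨y, hy⟩ := Sum.isLeft_iff.mp hL
        exact ⟨a.2, y, by rwa [Subtype.coe_eta]⟩
      · rintro ⟨hz, y, hy⟩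
        exact ⟨⟨z, hz⟩, by rw [hy]; rfl, rfl⟩
    have hmemY' : ∀ z, z ∈ Y' ↔ ∃ h : z ∈ Y, ∃ x, σ.symm (Sum.inl ⟨z, h⟩) = Sum.inl x := by
      intro z
      rw [hY']
      simp only [Finset.mem_image, Finset.mem_filter, Finset.mem_attach, true_and]
      constructor
      · rintro ⟨a, hL, rfl⟩
        obtain ⟨x, hx⟩ := Sum.isLeft_iff.mp hL
        exact ⟨a.2, x, by rwa [Subtype.coe_eta]⟩
      · rintro ⟨hz, x, hx⟩
        exact ⟨⟨z, hz⟩, by rw [hx]; rfl, rfl⟩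
    set η : ℝ × ℝ → ℝ × ℝ := fun z =>
      if h : z ∈ X then Sum.elim (fun (y : {y // y ∈ Y}) => (y : ℝ × ℝ)) (fun _ => z) (σ (Sum.inl ⟨z, h⟩))
      else z with hη
    have hηeq : ∀ z (h : z ∈ X) y, σ (Sum.inl ⟨z, h⟩) = Sum.inl y → η z = y := by
      intro z h y hy
      rw [hη]; simp only [dif_pos h, hy, Sum.elim_inl]
    have hX'sub : X' ⊆ X := by
      intro z hz; exact ((hmemX' z).mp hz).1
    have hY'sub : Y' ⊆ Y := by
      intro z hz; exact ((hmemY' z).mp hz).1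
    refine ⟨X', Y', η, hX'sub, hY'sub, ⟨?_, ?_, ?_⟩, ?_, ?_⟩
    · -- MapsTo
      intro z hz
      rw [Finset.mem_coe, hmemX'] at hz
      obtain ⟨hzX, y, hy⟩ := hz
      rw [Finset.mem_coe, hηeq z hzX y hy, hmemY']
      refine ⟨y.2, ⟨z, hzX⟩, ?_⟩
      rw [Subtype.coe_eta, Equiv.symm_apply_eq, hy]
    · -- InjOn
      intro z1 hz1 z2 hz2 he
      rw [Finset.mem_coe, hmemX'] at hz1 hz2
      obtain ⟨h1, y1, hy1⟩ := hz1
      obtain ⟨h2, y2, hy2⟩ := hz2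
      rw [hηeq z1 h1 y1 hy1, hηeq z2 h2 y2 hy2] at he
      have : y1 = y2 := Subtype.ext he
      have := σ.injective (hy1.trans (this ▸ hy2.symm))
      exact congrArg Subtype.val (Sum.inl_injective this)
    · -- SurjOn
      intro y hy
      rw [Finset.mem_coe, hmemY'] at hy
      obtain ⟨hyY, x, hx⟩ := hy
      have hσx : σ (Sum.inl x) = Sum.inl ⟨y, hyY⟩ := by
        rw [← hx, Equiv.apply_symm_apply]
      have hxX' : (x : ℝ × ℝ) ∈ X' := by
        rw [hmemX']
        exact ⟨x.2, ⟨y, hyY⟩, by rw [Subtype.coe_eta]; exact hσx⟩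
      refine ⟨(x : ℝ × ℝ), hxX', ?_⟩
      rw [hηeq (x : ℝ × ℝ) x.2 ⟨y, hyY⟩ (by rw [Subtype.coe_eta]; exact hσx)]
    · -- matched cost
      intro x hx
      rw [hmemX'] at hx
      obtain ⟨hxX, y, hy⟩ := hx
      rw [hηeq x hxX y hy]
      have := hσ (Sum.inl ⟨x, hxX⟩)
      rwa [hy] at this
    · -- unmatched cost
      intro z hz
      rcases Finset.mem_union.mp hz with hz | hz
      · obtain ⟨hzX, hzX'⟩ := Finset.mem_sdiff.mp hz
        rcases hcase : σ (Sum.inl ⟨z, hzX⟩) with y | x''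
        · exact absurd ((hmemX' z).mpr ⟨hzX, y, hcase⟩) hzX'
        · have hcost := hσ (Sum.inl ⟨z, hzX⟩)
          rw [hcase] at hcost
          have : c (Sum.inl ⟨z, hzX⟩) (Sum.inr x'') =
              ‖z - ((((x'' : ℝ × ℝ).1 + (x'' : ℝ × ℝ).2) / 2, ((x'' : ℝ × ℝ).1 + (x'' : ℝ × ℝ).2) / 2) : ℝ × ℝ)‖ := rfl
          rw [this] at hcost
          exact le_trans (diag_le_norm z _) hcost
      · obtain ⟨hzY, hzY'⟩ := Finset.mem_sdiff.mp hz
        rcases hcase : σ.symm (Sum.inl ⟨z, hzY⟩) with x | y''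
        · exact absurd ((hmemY' z).mpr ⟨hzY, x, hcase⟩) hzY'
        · have hσy : σ (Sum.inr y'') = Sum.inl ⟨z, hzY⟩ := by
            rw [← hcase, Equiv.apply_symm_apply]
          have hcost := hσ (Sum.inr y'')
          rw [hσy] at hcost
          have : c (Sum.inr y'') (Sum.inl ⟨z, hzY⟩) =
              ‖((((y'' : ℝ × ℝ).1 + (y'' : ℝ × ℝ).2) / 2, ((y'' : ℝ × ℝ).1 + (y'' : ℝ × ℝ).2) / 2) : ℝ × ℝ) - z‖ := rfl
          rw [this, ← norm_neg, neg_sub] at hcost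
          exact le_trans (diag_le_norm z _) hcost
  -- direction B → A
  have hBA : ∀ lam : ℝ, (0 ≤ lam ∧ ∃ (X' Y' : Finset (ℝ × ℝ)) (η : ℝ × ℝ → ℝ × ℝ),
        X' ⊆ X ∧ Y' ⊆ Y ∧ Set.BijOn η ↑X' ↑Y' ∧
        (∀ x ∈ X', ‖x - η x‖ ≤ lam) ∧
        (∀ z ∈ (X \ X') ∪ (Y \ Y'), (z.2 - z.1) / 2 ≤ lam)) →
      (0 ≤ lam ∧ ∃ σ : ({x // x ∈ X} ⊕ {y // y ∈ Y}) ≃ ({y // y ∈ Y} ⊕ {x // x ∈ X}), ∀ u, c u (σ u) ≤ lam) := by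
    rintro lam ⟨h0, X', Y', η, hX'sub, hY'sub, hbij, h1, h2⟩
    refine ⟨h0, ?_⟩
    set g := Function.invFunOn η (↑X' : Set (ℝ × ℝ)) with hg
    have hinv : Set.InvOn g η ↑X' ↑Y' := hbij.invOn_invFunOn
    have hgmaps : Set.MapsTo g ↑Y' ↑X' := hbij.surjOn.mapsTo_invFunOn
    set f : ({x // x ∈ X} ⊕ {y // y ∈ Y}) → ({y // y ∈ Y} ⊕ {x // x ∈ X}) :=
      Sum.elim
        (fun x => if h : (x : ℝ × ℝ) ∈ X' then
            Sum.inl (⟨η x, hY'sub (Finset.mem_coe.mp (hbij.mapsTo (Finset.mem_coe.mpr h)))⟩ :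
              {y // y ∈ Y})
          else Sum.inr x)
        (fun y => if h : (y : ℝ × ℝ) ∈ Y' then
            Sum.inr (⟨g y, hX'sub (Finset.mem_coe.mp (hgmaps (Finset.mem_coe.mpr h)))⟩ :
              {x // x ∈ X})
          else Sum.inl y) with hf
    have hfinj : Function.Injective f := by
      intro u1 u2 h12
      rcases u1 with x1 | y1 <;> rcases u2 with x2 | y2
      · by_cases hx1 : (x1 : ℝ × ℝ) ∈ X' <;> by_cases hx2 : (x2 : ℝ × ℝ) ∈ X'
        · rw [hf] at h12
          simp only [Sum.elim_inl, dif_pos hx1, dif_pos hx2, Sum.inl.injEq,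
            Subtype.mk.injEq] at h12
          exact congrArg Sum.inl (Subtype.ext
            (hbij.injOn (Finset.mem_coe.mpr hx1) (Finset.mem_coe.mpr hx2) h12))
        · rw [hf] at h12
          simp only [Sum.elim_inl, dif_pos hx1, dif_neg hx2] at h12
          exact absurd h12 Sum.inl_ne_inr
        · rw [hf] at h12
          simp only [Sum.elim_inl, dif_neg hx1, dif_pos hx2] at h12
          exact absurd h12 Sum.inr_ne_inl
        · rw [hf] at h12
          simp only [Sum.elim_inl, dif_neg hx1, dif_neg hx2, Sum.inr.injEq] at h12
          exact congrArg Sum.inl h12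
      · by_cases hx1 : (x1 : ℝ × ℝ) ∈ X' <;> by_cases hy2 : (y2 : ℝ × ℝ) ∈ Y'
        · rw [hf] at h12
          simp only [Sum.elim_inl, Sum.elim_inr, dif_pos hx1, dif_pos hy2] at h12
          exact absurd h12 Sum.inl_ne_inr
        · rw [hf] at h12
          simp only [Sum.elim_inl, Sum.elim_inr, dif_pos hx1, dif_neg hy2,
            Sum.inl.injEq] at h12
          have : η (x1 : ℝ × ℝ) = (y2 : ℝ × ℝ) := congrArg Subtype.val h12
          exact absurd (this ▸ Finset.mem_coe.mp (hbij.mapsTo (Finset.mem_coe.mpr hx1))) hy2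
        · rw [hf] at h12
          simp only [Sum.elim_inl, Sum.elim_inr, dif_neg hx1, dif_pos hy2,
            Sum.inr.injEq] at h12
          have : (x1 : ℝ × ℝ) = g (y2 : ℝ × ℝ) := congrArg Subtype.val h12
          exact absurd (this ▸ Finset.mem_coe.mp (hgmaps (Finset.mem_coe.mpr hy2))) hx1
        · rw [hf] at h12
          simp only [Sum.elim_inl, Sum.elim_inr, dif_neg hx1, dif_neg hy2] at h12
          exact absurd h12 Sum.inr_ne_inl
      · by_cases hy1 : (y1 : ℝ × ℝ) ∈ Y' <;> by_cases hx2 : (x2 : ℝ × ℝ) ∈ X'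
        · rw [hf] at h12
          simp only [Sum.elim_inl, Sum.elim_inr, dif_pos hy1, dif_pos hx2] at h12
          exact absurd h12 Sum.inr_ne_inl
        · rw [hf] at h12
          simp only [Sum.elim_inl, Sum.elim_inr, dif_pos hy1, dif_neg hx2,
            Sum.inr.injEq] at h12
          have : g (y1 : ℝ × ℝ) = (x2 : ℝ × ℝ) := congrArg Subtype.val h12
          exact absurd (this ▸ Finset.mem_coe.mp (hgmaps (Finset.mem_coe.mpr hy1))) hx2
        · rw [hf] at h12
          simp only [Sum.elim_inl, Sum.elim_inr, dif_neg hy1, dif_pos hx2,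
            Sum.inl.injEq] at h12
          have : (y1 : ℝ × ℝ) = η (x2 : ℝ × ℝ) := congrArg Subtype.val h12
          exact absurd (this ▸ Finset.mem_coe.mp (hbij.mapsTo (Finset.mem_coe.mpr hx2))) hy1
        · rw [hf] at h12
          simp only [Sum.elim_inl, Sum.elim_inr, dif_neg hy1, dif_neg hx2] at h12
          exact absurd h12 Sum.inl_ne_inr
      · by_cases hy1 : (y1 : ℝ × ℝ) ∈ Y' <;> by_cases hy2 : (y2 : ℝ × ℝ) ∈ Y'
        · rw [hf] at h12
          simp only [Sum.elim_inr, dif_pos hy1, dif_pos hy2, Sum.inr.injEq,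
            Subtype.mk.injEq] at h12
          have : η (g (y1 : ℝ × ℝ)) = η (g (y2 : ℝ × ℝ)) := by rw [h12]
          rw [hinv.2 (Finset.mem_coe.mpr hy1), hinv.2 (Finset.mem_coe.mpr hy2)] at this
          exact congrArg Sum.inr (Subtype.ext this)
        · rw [hf] at h12
          simp only [Sum.elim_inr, dif_pos hy1, dif_neg hy2] at h12
          exact absurd h12 Sum.inr_ne_inl
        · rw [hf] at h12
          simp only [Sum.elim_inr, dif_neg hy1, dif_pos hy2] at h12
          exact absurd h12 Sum.inl_ne_inr
        · rw [hf] at h12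
          simp only [Sum.elim_inr, dif_neg hy1, dif_neg hy2, Sum.inl.injEq] at h12
          exact congrArg Sum.inr h12
    have hfbij : Function.Bijective f :=
      (Fintype.bijective_iff_injective_and_card f).mpr ⟨hfinj, hcard⟩
    refine ⟨Equiv.ofBijective f hfbij, ?_⟩
    intro u
    have hval : (Equiv.ofBijective f hfbij) u = f u := rfl
    rw [hval]
    rcases u with x | y
    · by_cases hx : (x : ℝ × ℝ) ∈ X'
      · have : f (Sum.inl x) = Sum.inl
            (⟨η x, hY'sub (Finset.mem_coe.mp (hbij.mapsTo (Finset.mem_coe.mpr hx)))⟩ :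
              {y // y ∈ Y}) := by
          simp only [hf, Sum.elim_inl, dif_pos hx]
        rw [this]
        exact h1 _ hx
      · have : f (Sum.inl x) = Sum.inr x := by
          simp only [hf, Sum.elim_inl, dif_neg hx]
        rw [this]
        have hcc : c (Sum.inl x) (Sum.inr x) = ‖(x : ℝ × ℝ) - diagProj (x : ℝ × ℝ)‖ := rfl
        rw [hcc, norm_diagProj _ (le_of_lt (hX _ x.2))]
        exact h2 _ (Finset.mem_union_left _ (Finset.mem_sdiff.mpr ⟨x.2, hx⟩))
    · by_cases hy : (y : ℝ × ℝ) ∈ Y'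
      · have : f (Sum.inr y) = Sum.inr
            (⟨g y, hX'sub (Finset.mem_coe.mp (hgmaps (Finset.mem_coe.mpr hy)))⟩ :
              {x // x ∈ X}) := by
          simp only [hf, Sum.elim_inr, dif_pos hy]
        rw [this]
        exact le_trans (le_of_eq rfl) h0
      · have : f (Sum.inr y) = Sum.inl y := by
          simp only [hf, Sum.elim_inr, dif_neg hy]
        rw [this]
        have hcc : c (Sum.inr y) (Sum.inl y) = ‖diagProj (y : ℝ × ℝ) - (y : ℝ × ℝ)‖ := rfl
        rw [hcc, ← norm_neg, neg_sub, norm_diagProj _ (le_of_lt (hY _ y.2))]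
        exact h2 _ (Finset.mem_union_right _ (Finset.mem_sdiff.mpr ⟨y.2, hy⟩))
  exact ⟨d, ⟨hdA, fun lam hlam => hlbA lam hlam⟩,
    ⟨hAB d hdA, fun lam hlam => hlbA lam (hBA lam hlam)⟩⟩
end

section
/- Let v ∈ ℝ² and let N ⊂ ℝ² be a finite set. Then the set of directions I_v = { ω ∈ ℝ² : ‖ω‖ = 1 and ⟨u − v, ω⟩ > 0 for all u ∈ N } is a connected subset of the unit circle (possibly empty). -/
open scoped RealInnerProductSpace

/-- For `v ∈ ℝ²` and a finite set `N ⊂ ℝ²`, the set of unit directions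
`I_v = {ω : ‖ω‖ = 1 ∧ ∀ u ∈ N, ⟨u − v, ω⟩ > 0}` is a connected (possibly empty) subset of
the unit circle. -/
theorem stmt13 (v : EuclideanSpace ℝ (Fin 2)) (N : Set (EuclideanSpace ℝ (Fin 2)))
    (hN : N.Finite) :
    IsPreconnected {ω : EuclideanSpace ℝ (Fin 2) | ‖ω‖ = 1 ∧ ∀ u ∈ N, 0 < ⟪u - v, ω⟫} := by
  classical
  by_cases hNe : N = ∅
  · subst hNe
    have hset : {ω : EuclideanSpace ℝ (Fin 2) | ‖ω‖ = 1 ∧ ∀ u ∈ (∅ : Set _), 0 < ⟪u - v, ω⟫}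
        = Metric.sphere (0 : EuclideanSpace ℝ (Fin 2)) 1 := by
      ext ω; simp [mem_sphere_iff_norm]
    rw [hset]
    have hrank : 1 < Module.rank ℝ (EuclideanSpace ℝ (Fin 2)) := by
      have : Module.rank ℝ (EuclideanSpace ℝ (Fin 2)) = 2 := by
        rw [← Module.finrank_eq_rank]
        norm_num [finrank_euclideanSpace_fin]
      rw [this]; norm_num
    exact (isConnected_sphere hrank 0 zero_le_one).isPreconnected
  · obtain ⟨u₀, hu₀⟩ := Set.nonempty_iff_ne_empty.2 hNe
    set K : Set (EuclideanSpace ℝ (Fin 2)) :=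
      {ω | ∀ u ∈ N, 0 < ⟪u - v, ω⟫} with hKdef
    have hKconv : Convex ℝ K := by
      have : K = ⋂ u ∈ N, {ω : EuclideanSpace ℝ (Fin 2) | 0 < ⟪u - v, ω⟫} := by
        ext ω; simp [hKdef]
      rw [this]
      refine convex_iInter fun u => convex_iInter fun _ => ?_
      exact convex_halfSpace_gt (IsLinearMap.mk (fun x y => inner_add_right _ x y)
        (fun c x => real_inner_smul_right _ _ _)) 0
    have h0K : ∀ x ∈ K, x ≠ 0 := by
      intro x hx h
      have := hx u₀ hu₀
      rw [h, inner_zero_right] at this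
      exact lt_irrefl 0 this
    have himg : {ω : EuclideanSpace ℝ (Fin 2) | ‖ω‖ = 1 ∧ ∀ u ∈ N, 0 < ⟪u - v, ω⟫}
        = (fun x : EuclideanSpace ℝ (Fin 2) => ‖x‖⁻¹ • x) '' K := by
      ext ω
      constructor
      · rintro ⟨hω1, hωK⟩
        exact ⟨ω, hωK, by show ‖ω‖⁻¹ • ω = ω; rw [hω1]; simp⟩
      · rintro ⟨x, hxK, rfl⟩
        have hx0 : x ≠ 0 := h0K x hxK
        have hnorm : ‖x‖ ≠ 0 := norm_ne_zero_iff.2 hx0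
        refine ⟨?_, fun u hu => ?_⟩
        · rw [norm_smul, norm_inv, norm_norm, inv_mul_cancel₀ hnorm]
        · rw [real_inner_smul_right]
          exact mul_pos (inv_pos.2 (norm_pos_iff.2 hx0)) (hxK u hu)
    rw [himg]
    refine hKconv.isPreconnected.image _ ?_
    have hcont : ContinuousOn (fun x : EuclideanSpace ℝ (Fin 2) => ‖x‖⁻¹ • x) {(0:EuclideanSpace ℝ (Fin 2))}ᶜ := by
      refine ContinuousOn.smul (?_ : ContinuousOn (fun x : EuclideanSpace ℝ (Fin 2) => ‖x‖⁻¹) {(0:EuclideanSpace ℝ (Fin 2))}ᶜ) (continuousOn_id (s := {(0:EuclideanSpace ℝ (Fin 2))}ᶜ))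
      exact ContinuousOn.inv₀ continuous_norm.continuousOn
        (fun x hx => norm_ne_zero_iff.2 hx)
    exact hcont.mono fun x hx => h0K x hx
end
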